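/- The toric ideal J = ⟨y_1 y_4 - x_1 z_4, y_3 x_4 - x_3 y_4, y_2 x_4 - x_2 z_4, z_1 y_3 - x_1 z_3, z_2 x_3 - x_2 z_3, z_1 y_2 - y_1 z_2, y_2 z_3 y_4 - z_2 y_3 z_4, y_1 z_3 x_4 - z_1 x_3 z_4, x_1 z_2 x_4 - z_1 x_2 y_4, x_1 y_2 x_3 - y_1 x_2 y_3⟩ in K[x_1,...,z_4] (12 variables) equals the elimination ideal (I ∩ K[x,y,z]) where I is the ideal of 2×2 minors of the 4×4 matrix with rows (w_1, x_2, x_3, x_4), (x_1, w_2, y_3, y_4), (y_1, y_2, w_3, z_4), (z_1, z_2, z_3, w_4) in K[w_1,...,w_4, x,y,z]. -/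

import Mathlib

open MvPolynomial

noncomputable section
variable (K : Type*) [Field K] [IsAlgClosed K]

-- Variables: `Sum.inl m` is the diagonal unknown `w_{m+1}`; `Sum.inr (i, r)` is the
-- `r`-th coordinate (`x`,`y`,`z` for `r = 0,1,2`) of camera `i+1`.
abbrev RR (K : Type*) [Field K] := MvPolynomial (Fin 4 ⊕ (Fin 4 × Fin 3)) K
abbrev SS (K : Type*) [Field K] := MvPolynomial (Fin 4 × Fin 3) K

def W (m : Fin 4) : RR K := X (Sum.inl m)
def xv (i : Fin 4) : SS K := X (i, 0)
def yv (i : Fin 4) : SS K := X (i, 1)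
def zv (i : Fin 4) : SS K := X (i, 2)

/-- The 4×4 matrix with rows `(w₁,x₂,x₃,x₄), (x₁,w₂,y₃,y₄), (y₁,y₂,w₃,z₄), (z₁,z₂,z₃,w₄)`. -/
def toricMatrix : Matrix (Fin 4) (Fin 4) (RR K) :=
  let V : Fin 4 → Fin 3 → RR K := fun i r => X (Sum.inr (i, r))
  Matrix.of
    ![![W K 0,  V 1 0,  V 2 0,  V 3 0],
      ![V 0 0,  W K 1,  V 2 1,  V 3 1],
      ![V 0 1,  V 1 1,  W K 2,  V 3 2],
      ![V 0 2,  V 1 2,  V 2 2,  W K 3]]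

/-- The ideal of 2×2 minors of `toricMatrix`. -/
def minorsIdeal : Ideal (RR K) :=
  Ideal.span {p | ∃ a b c d : Fin 4,
    p = toricMatrix K a c * toricMatrix K b d - toricMatrix K a d * toricMatrix K b c}

def genSet : Set (SS K) := {p : SS K |
      p = yv K 0 * yv K 3 - xv K 0 * zv K 3 ∨
      p = yv K 2 * xv K 3 - xv K 2 * yv K 3 ∨
      p = yv K 1 * xv K 3 - xv K 1 * zv K 3 ∨
      p = zv K 0 * yv K 2 - xv K 0 * zv K 2 ∨
      p = zv K 1 * xv K 2 - xv K 1 * zv K 2 ∨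
      p = zv K 0 * yv K 1 - yv K 0 * zv K 1 ∨
      p = yv K 1 * zv K 2 * yv K 3 - zv K 1 * yv K 2 * zv K 3 ∨
      p = yv K 0 * zv K 2 * xv K 3 - zv K 0 * xv K 2 * zv K 3 ∨
      p = xv K 0 * zv K 1 * xv K 3 - zv K 0 * xv K 1 * yv K 3 ∨
      p = xv K 0 * yv K 1 * xv K 2 - yv K 0 * xv K 1 * yv K 2}

def Jspan : Ideal (SS K) := Ideal.span (genSet K)

/-- cell (row j, col i) ↦ variable; junk on diagonal -/
def cidx (j i : Fin 4) : Fin 4 × Fin 3 := (i, ![![0,0,1,2],![0,0,1,2],![0,1,0,2],![0,1,2,0]] i j)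
def rowOf (v : Fin 4 × Fin 3) : Fin 4 := ![![1,2,3],![0,2,3],![0,1,3],![0,1,2]] v.1 v.2

lemma rowOf_cidx : ∀ j i : Fin 4, j ≠ i → rowOf (cidx j i) = j := by decide
lemma snd_cidx : ∀ j i : Fin 4, (cidx j i).1 = i := by decide
lemma cidx_rowOf : ∀ v : Fin 4 × Fin 3, cidx (rowOf v) v.1 = v := by decide
lemma rowOf_ne : ∀ v : Fin 4 × Fin 3, rowOf v ≠ v.1 := by decide
lemma cidx_inj : ∀ (j i j' i' : Fin 4), j ≠ i → j' ≠ i' → cidx j i = cidx j' i' → j = j' ∧ i = i' := by decide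

/-- exponent-vector image under the monomial map -/
def T (α : (Fin 4 × Fin 3) →₀ ℕ) : (Fin 4 ⊕ Fin 4) →₀ ℕ :=
  α.sum fun v n => n • (Finsupp.single (Sum.inl (rowOf v)) 1 + Finsupp.single (Sum.inr v.1) 1)

lemma T_add (α β : (Fin 4 × Fin 3) →₀ ℕ) : T (α + β) = T α + T β := by
  unfold T; apply Finsupp.sum_add_index' <;> intros <;> simp [add_smul] <;> abel

lemma T_single (v : Fin 4 × Fin 3) (n : ℕ) :
    T (Finsupp.single v n) = Finsupp.single (Sum.inl (rowOf v)) n + Finsupp.single (Sum.inr v.1) n := by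
  unfold T
  rw [Finsupp.sum_single_index (by simp)]
  simp [smul_add, Finsupp.smul_single]

lemma T_zero : T 0 = 0 := by unfold T; simp

lemma T_apply (α : (Fin 4 × Fin 3) →₀ ℕ) (x : Fin 4 ⊕ Fin 4) :
    T α x = α.sum fun v n =>
      n * ((Finsupp.single (Sum.inl (rowOf v)) 1 + Finsupp.single (Sum.inr v.1) 1 : (Fin 4 ⊕ Fin 4) →₀ ℕ) x) := by
  unfold T
  rw [Finsupp.sum_apply]
  apply Finsupp.sum_congr
  intro v _
  simp only [Finsupp.smul_apply, Finsupp.add_apply, Finsupp.single_apply, smul_eq_mul, mul_add]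

lemma T_col_pos {α : (Fin 4 × Fin 3) →₀ ℕ} {v : Fin 4 × Fin 3} (h : α v ≠ 0) :
    T α (Sum.inr v.1) ≠ 0 := by
  rw [T_apply]
  intro h0
  rw [Finsupp.sum, Finset.sum_eq_zero_iff] at h0
  have := h0 v (Finsupp.mem_support_iff.2 h)
  simp [Finsupp.single_apply] at this
  exact h this

lemma T_row_pos {α : (Fin 4 × Fin 3) →₀ ℕ} {v : Fin 4 × Fin 3} (h : α v ≠ 0) :
    T α (Sum.inl (rowOf v)) ≠ 0 := by
  rw [T_apply]
  intro h0
  rw [Finsupp.sum, Finset.sum_eq_zero_iff] at h0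
  have := h0 v (Finsupp.mem_support_iff.2 h)
  simp [Finsupp.single_apply] at this
  exact h this

lemma T_col_ex {β : (Fin 4 × Fin 3) →₀ ℕ} {i : Fin 4} (h : T β (Sum.inr i) ≠ 0) :
    ∃ w, β w ≠ 0 ∧ w.1 = i := by
  rw [T_apply, Finsupp.sum] at h
  obtain ⟨w, hw, hne⟩ := Finset.exists_ne_zero_of_sum_ne_zero h
  refine ⟨w, Finsupp.mem_support_iff.1 hw, ?_⟩
  by_contra hne'
  simp [Finsupp.single_apply, hne'] at hne

lemma T_row_ex {β : (Fin 4 × Fin 3) →₀ ℕ} {j : Fin 4} (h : T β (Sum.inl j) ≠ 0) :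
    ∃ w, β w ≠ 0 ∧ rowOf w = j := by
  rw [T_apply, Finsupp.sum] at h
  obtain ⟨w, hw, hne⟩ := Finset.exists_ne_zero_of_sum_ne_zero h
  refine ⟨w, Finsupp.mem_support_iff.1 hw, ?_⟩
  by_contra hne'
  simp [Finsupp.single_apply, hne'] at hne

lemma T_eq_zero {β : (Fin 4 × Fin 3) →₀ ℕ} (h : T β = 0) : β = 0 := by
  by_contra hb
  obtain ⟨v, hv⟩ := Finsupp.ne_iff.1 hb
  simp only [Finsupp.coe_zero, Pi.zero_apply] at hv
  exact T_col_pos hv (by rw [h]; rfl)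

def deg (α : (Fin 4 × Fin 3) →₀ ℕ) : ℕ := α.sum fun _ n => n

lemma deg_add (α β : (Fin 4 × Fin 3) →₀ ℕ) : deg (α + β) = deg α + deg β :=
  Finsupp.sum_add_index' (fun _ => rfl) (fun _ _ _ => rfl)

lemma deg_single (v : Fin 4 × Fin 3) (n : ℕ) : deg (Finsupp.single v n) = n := by
  unfold deg; rw [Finsupp.sum_single_index]; rfl

lemma deg_eq_zero {α : (Fin 4 × Fin 3) →₀ ℕ} (h : deg α = 0) : α = 0 := by
  unfold deg Finsupp.sum at h
  rw [Finset.sum_eq_zero_iff] at h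
  ext v
  by_contra hv
  exact absurd (h v (Finsupp.mem_support_iff.2 (by simpa using hv))) (by simpa using hv)

lemma mem1 {g : SS K} (h : g ∈ genSet K) : g ∈ Jspan K := Ideal.subset_span h
lemma mem2 {g : SS K} (h : -g ∈ genSet K) : g ∈ Jspan K := by
  unfold Jspan
  simpa using neg_mem (Ideal.subset_span h)

lemma cidx10 : cidx 1 0 = ((0:Fin 4),(0:Fin 3)) := by decide
lemma cidx20 : cidx 2 0 = ((0:Fin 4),(1:Fin 3)) := by decide
lemma cidx30 : cidx 3 0 = ((0:Fin 4),(2:Fin 3)) := by decide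
lemma cidx01 : cidx 0 1 = ((1:Fin 4),(0:Fin 3)) := by decide
lemma cidx21 : cidx 2 1 = ((1:Fin 4),(1:Fin 3)) := by decide
lemma cidx31 : cidx 3 1 = ((1:Fin 4),(2:Fin 3)) := by decide
lemma cidx02 : cidx 0 2 = ((2:Fin 4),(0:Fin 3)) := by decide
lemma cidx12 : cidx 1 2 = ((2:Fin 4),(1:Fin 3)) := by decide
lemma cidx32 : cidx 3 2 = ((2:Fin 4),(2:Fin 3)) := by decide
lemma cidx03 : cidx 0 3 = ((3:Fin 4),(0:Fin 3)) := by decide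
lemma cidx13 : cidx 1 3 = ((3:Fin 4),(1:Fin 3)) := by decide
lemma cidx23 : cidx 2 3 = ((3:Fin 4),(2:Fin 3)) := by decide

lemma fmk0 (h : (0:ℕ) < 4) : (⟨0, h⟩ : Fin 4) = 0 := rfl
lemma fmk1 (h : (1:ℕ) < 4) : (⟨1, h⟩ : Fin 4) = 1 := rfl
lemma fmk2 (h : (2:ℕ) < 4) : (⟨2, h⟩ : Fin 4) = 2 := rfl
lemma fmk3 (h : (3:ℕ) < 4) : (⟨3, h⟩ : Fin 4) = 3 := rfl

lemma qc0123 : (X (cidx 0 2) * X (cidx 1 3) - X (cidx 0 3) * X (cidx 1 2) : SS K) ∈ Jspan K := by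
  apply mem2
  simp only [genSet, xv, yv, zv, Set.mem_setOf_eq]
  refine Or.inr (Or.inl ?_)
  simp only [cidx02, cidx03, cidx12, cidx13]
  ring

lemma qc0132 : (X (cidx 0 3) * X (cidx 1 2) - X (cidx 0 2) * X (cidx 1 3) : SS K) ∈ Jspan K := by
  apply mem1
  simp only [genSet, xv, yv, zv, Set.mem_setOf_eq]
  refine Or.inr (Or.inl ?_)
  simp only [cidx02, cidx03, cidx12, cidx13]
  ring

lemma qc0213 : (X (cidx 0 1) * X (cidx 2 3) - X (cidx 0 3) * X (cidx 2 1) : SS K) ∈ Jspan K := by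
  apply mem2
  simp only [genSet, xv, yv, zv, Set.mem_setOf_eq]
  refine Or.inr (Or.inr (Or.inl ?_))
  simp only [cidx01, cidx03, cidx21, cidx23]
  ring

lemma qc0231 : (X (cidx 0 3) * X (cidx 2 1) - X (cidx 0 1) * X (cidx 2 3) : SS K) ∈ Jspan K := by
  apply mem1
  simp only [genSet, xv, yv, zv, Set.mem_setOf_eq]
  refine Or.inr (Or.inr (Or.inl ?_))
  simp only [cidx01, cidx03, cidx21, cidx23]
  ring

lemma qc0312 : (X (cidx 0 1) * X (cidx 3 2) - X (cidx 0 2) * X (cidx 3 1) : SS K) ∈ Jspan K := by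
  apply mem2
  simp only [genSet, xv, yv, zv, Set.mem_setOf_eq]
  refine Or.inr (Or.inr (Or.inr (Or.inr (Or.inl ?_))))
  simp only [cidx01, cidx02, cidx31, cidx32]
  ring

lemma qc0321 : (X (cidx 0 2) * X (cidx 3 1) - X (cidx 0 1) * X (cidx 3 2) : SS K) ∈ Jspan K := by
  apply mem1
  simp only [genSet, xv, yv, zv, Set.mem_setOf_eq]
  refine Or.inr (Or.inr (Or.inr (Or.inr (Or.inl ?_))))
  simp only [cidx01, cidx02, cidx31, cidx32]
  ring

lemma qc1023 : (X (cidx 1 2) * X (cidx 0 3) - X (cidx 1 3) * X (cidx 0 2) : SS K) ∈ Jspan K := by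
  apply mem1
  simp only [genSet, xv, yv, zv, Set.mem_setOf_eq]
  refine Or.inr (Or.inl ?_)
  simp only [cidx02, cidx03, cidx12, cidx13]
  ring

lemma qc1032 : (X (cidx 1 3) * X (cidx 0 2) - X (cidx 1 2) * X (cidx 0 3) : SS K) ∈ Jspan K := by
  apply mem2
  simp only [genSet, xv, yv, zv, Set.mem_setOf_eq]
  refine Or.inr (Or.inl ?_)
  simp only [cidx02, cidx03, cidx12, cidx13]
  ring

lemma qc1203 : (X (cidx 1 0) * X (cidx 2 3) - X (cidx 1 3) * X (cidx 2 0) : SS K) ∈ Jspan K := by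
  apply mem2
  simp only [genSet, xv, yv, zv, Set.mem_setOf_eq]
  refine Or.inl ?_
  simp only [cidx10, cidx13, cidx20, cidx23]
  ring

lemma qc1230 : (X (cidx 1 3) * X (cidx 2 0) - X (cidx 1 0) * X (cidx 2 3) : SS K) ∈ Jspan K := by
  apply mem1
  simp only [genSet, xv, yv, zv, Set.mem_setOf_eq]
  refine Or.inl ?_
  simp only [cidx10, cidx13, cidx20, cidx23]
  ring

lemma qc1302 : (X (cidx 1 0) * X (cidx 3 2) - X (cidx 1 2) * X (cidx 3 0) : SS K) ∈ Jspan K := by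
  apply mem2
  simp only [genSet, xv, yv, zv, Set.mem_setOf_eq]
  refine Or.inr (Or.inr (Or.inr (Or.inl ?_)))
  simp only [cidx10, cidx12, cidx30, cidx32]
  ring

lemma qc1320 : (X (cidx 1 2) * X (cidx 3 0) - X (cidx 1 0) * X (cidx 3 2) : SS K) ∈ Jspan K := by
  apply mem1
  simp only [genSet, xv, yv, zv, Set.mem_setOf_eq]
  refine Or.inr (Or.inr (Or.inr (Or.inl ?_)))
  simp only [cidx10, cidx12, cidx30, cidx32]
  ring

lemma qc2013 : (X (cidx 2 1) * X (cidx 0 3) - X (cidx 2 3) * X (cidx 0 1) : SS K) ∈ Jspan K := by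
  apply mem1
  simp only [genSet, xv, yv, zv, Set.mem_setOf_eq]
  refine Or.inr (Or.inr (Or.inl ?_))
  simp only [cidx01, cidx03, cidx21, cidx23]
  ring

lemma qc2031 : (X (cidx 2 3) * X (cidx 0 1) - X (cidx 2 1) * X (cidx 0 3) : SS K) ∈ Jspan K := by
  apply mem2
  simp only [genSet, xv, yv, zv, Set.mem_setOf_eq]
  refine Or.inr (Or.inr (Or.inl ?_))
  simp only [cidx01, cidx03, cidx21, cidx23]
  ring

lemma qc2103 : (X (cidx 2 0) * X (cidx 1 3) - X (cidx 2 3) * X (cidx 1 0) : SS K) ∈ Jspan K := by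
  apply mem1
  simp only [genSet, xv, yv, zv, Set.mem_setOf_eq]
  refine Or.inl ?_
  simp only [cidx10, cidx13, cidx20, cidx23]
  ring

lemma qc2130 : (X (cidx 2 3) * X (cidx 1 0) - X (cidx 2 0) * X (cidx 1 3) : SS K) ∈ Jspan K := by
  apply mem2
  simp only [genSet, xv, yv, zv, Set.mem_setOf_eq]
  refine Or.inl ?_
  simp only [cidx10, cidx13, cidx20, cidx23]
  ring

lemma qc2301 : (X (cidx 2 0) * X (cidx 3 1) - X (cidx 2 1) * X (cidx 3 0) : SS K) ∈ Jspan K := by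
  apply mem2
  simp only [genSet, xv, yv, zv, Set.mem_setOf_eq]
  refine Or.inr (Or.inr (Or.inr (Or.inr (Or.inr (Or.inl ?_)))))
  simp only [cidx20, cidx21, cidx30, cidx31]
  ring

lemma qc2310 : (X (cidx 2 1) * X (cidx 3 0) - X (cidx 2 0) * X (cidx 3 1) : SS K) ∈ Jspan K := by
  apply mem1
  simp only [genSet, xv, yv, zv, Set.mem_setOf_eq]
  refine Or.inr (Or.inr (Or.inr (Or.inr (Or.inr (Or.inl ?_)))))
  simp only [cidx20, cidx21, cidx30, cidx31]
  ring

lemma qc3012 : (X (cidx 3 1) * X (cidx 0 2) - X (cidx 3 2) * X (cidx 0 1) : SS K) ∈ Jspan K := by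
  apply mem1
  simp only [genSet, xv, yv, zv, Set.mem_setOf_eq]
  refine Or.inr (Or.inr (Or.inr (Or.inr (Or.inl ?_))))
  simp only [cidx01, cidx02, cidx31, cidx32]
  ring

lemma qc3021 : (X (cidx 3 2) * X (cidx 0 1) - X (cidx 3 1) * X (cidx 0 2) : SS K) ∈ Jspan K := by
  apply mem2
  simp only [genSet, xv, yv, zv, Set.mem_setOf_eq]
  refine Or.inr (Or.inr (Or.inr (Or.inr (Or.inl ?_))))
  simp only [cidx01, cidx02, cidx31, cidx32]
  ring

lemma qc3102 : (X (cidx 3 0) * X (cidx 1 2) - X (cidx 3 2) * X (cidx 1 0) : SS K) ∈ Jspan K := by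
  apply mem1
  simp only [genSet, xv, yv, zv, Set.mem_setOf_eq]
  refine Or.inr (Or.inr (Or.inr (Or.inl ?_)))
  simp only [cidx10, cidx12, cidx30, cidx32]
  ring

lemma qc3120 : (X (cidx 3 2) * X (cidx 1 0) - X (cidx 3 0) * X (cidx 1 2) : SS K) ∈ Jspan K := by
  apply mem2
  simp only [genSet, xv, yv, zv, Set.mem_setOf_eq]
  refine Or.inr (Or.inr (Or.inr (Or.inl ?_)))
  simp only [cidx10, cidx12, cidx30, cidx32]
  ring

lemma qc3201 : (X (cidx 3 0) * X (cidx 2 1) - X (cidx 3 1) * X (cidx 2 0) : SS K) ∈ Jspan K := by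
  apply mem1
  simp only [genSet, xv, yv, zv, Set.mem_setOf_eq]
  refine Or.inr (Or.inr (Or.inr (Or.inr (Or.inr (Or.inl ?_)))))
  simp only [cidx20, cidx21, cidx30, cidx31]
  ring

lemma qc3210 : (X (cidx 3 1) * X (cidx 2 0) - X (cidx 3 0) * X (cidx 2 1) : SS K) ∈ Jspan K := by
  apply mem2
  simp only [genSet, xv, yv, zv, Set.mem_setOf_eq]
  refine Or.inr (Or.inr (Or.inr (Or.inr (Or.inr (Or.inl ?_)))))
  simp only [cidx20, cidx21, cidx30, cidx31]
  ring

lemma cc012 : (X (cidx 0 1) * X (cidx 1 2) * X (cidx 2 0) - X (cidx 0 2) * X (cidx 2 1) * X (cidx 1 0) : SS K) ∈ Jspan K := by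
  apply mem2
  simp only [genSet, xv, yv, zv, Set.mem_setOf_eq]
  refine Or.inr (Or.inr (Or.inr (Or.inr (Or.inr (Or.inr (Or.inr (Or.inr (Or.inr (?_)))))))))
  simp only [cidx01, cidx02, cidx10, cidx12, cidx20, cidx21]
  ring

lemma cc013 : (X (cidx 0 1) * X (cidx 1 3) * X (cidx 3 0) - X (cidx 0 3) * X (cidx 3 1) * X (cidx 1 0) : SS K) ∈ Jspan K := by
  apply mem2
  simp only [genSet, xv, yv, zv, Set.mem_setOf_eq]
  refine Or.inr (Or.inr (Or.inr (Or.inr (Or.inr (Or.inr (Or.inr (Or.inr (Or.inl ?_))))))))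
  simp only [cidx01, cidx03, cidx10, cidx13, cidx30, cidx31]
  ring

lemma cc021 : (X (cidx 0 2) * X (cidx 2 1) * X (cidx 1 0) - X (cidx 0 1) * X (cidx 1 2) * X (cidx 2 0) : SS K) ∈ Jspan K := by
  apply mem1
  simp only [genSet, xv, yv, zv, Set.mem_setOf_eq]
  refine Or.inr (Or.inr (Or.inr (Or.inr (Or.inr (Or.inr (Or.inr (Or.inr (Or.inr (?_)))))))))
  simp only [cidx01, cidx02, cidx10, cidx12, cidx20, cidx21]
  ring

lemma cc023 : (X (cidx 0 2) * X (cidx 2 3) * X (cidx 3 0) - X (cidx 0 3) * X (cidx 3 2) * X (cidx 2 0) : SS K) ∈ Jspan K := by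
  apply mem2
  simp only [genSet, xv, yv, zv, Set.mem_setOf_eq]
  refine Or.inr (Or.inr (Or.inr (Or.inr (Or.inr (Or.inr (Or.inr (Or.inl ?_)))))))
  simp only [cidx02, cidx03, cidx20, cidx23, cidx30, cidx32]
  ring

lemma cc031 : (X (cidx 0 3) * X (cidx 3 1) * X (cidx 1 0) - X (cidx 0 1) * X (cidx 1 3) * X (cidx 3 0) : SS K) ∈ Jspan K := by
  apply mem1
  simp only [genSet, xv, yv, zv, Set.mem_setOf_eq]
  refine Or.inr (Or.inr (Or.inr (Or.inr (Or.inr (Or.inr (Or.inr (Or.inr (Or.inl ?_))))))))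
  simp only [cidx01, cidx03, cidx10, cidx13, cidx30, cidx31]
  ring

lemma cc032 : (X (cidx 0 3) * X (cidx 3 2) * X (cidx 2 0) - X (cidx 0 2) * X (cidx 2 3) * X (cidx 3 0) : SS K) ∈ Jspan K := by
  apply mem1
  simp only [genSet, xv, yv, zv, Set.mem_setOf_eq]
  refine Or.inr (Or.inr (Or.inr (Or.inr (Or.inr (Or.inr (Or.inr (Or.inl ?_)))))))
  simp only [cidx02, cidx03, cidx20, cidx23, cidx30, cidx32]
  ring

lemma cc102 : (X (cidx 1 0) * X (cidx 0 2) * X (cidx 2 1) - X (cidx 1 2) * X (cidx 2 0) * X (cidx 0 1) : SS K) ∈ Jspan K := by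
  apply mem1
  simp only [genSet, xv, yv, zv, Set.mem_setOf_eq]
  refine Or.inr (Or.inr (Or.inr (Or.inr (Or.inr (Or.inr (Or.inr (Or.inr (Or.inr (?_)))))))))
  simp only [cidx01, cidx02, cidx10, cidx12, cidx20, cidx21]
  ring

lemma cc103 : (X (cidx 1 0) * X (cidx 0 3) * X (cidx 3 1) - X (cidx 1 3) * X (cidx 3 0) * X (cidx 0 1) : SS K) ∈ Jspan K := by
  apply mem1
  simp only [genSet, xv, yv, zv, Set.mem_setOf_eq]
  refine Or.inr (Or.inr (Or.inr (Or.inr (Or.inr (Or.inr (Or.inr (Or.inr (Or.inl ?_))))))))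
  simp only [cidx01, cidx03, cidx10, cidx13, cidx30, cidx31]
  ring

lemma cc120 : (X (cidx 1 2) * X (cidx 2 0) * X (cidx 0 1) - X (cidx 1 0) * X (cidx 0 2) * X (cidx 2 1) : SS K) ∈ Jspan K := by
  apply mem2
  simp only [genSet, xv, yv, zv, Set.mem_setOf_eq]
  refine Or.inr (Or.inr (Or.inr (Or.inr (Or.inr (Or.inr (Or.inr (Or.inr (Or.inr (?_)))))))))
  simp only [cidx01, cidx02, cidx10, cidx12, cidx20, cidx21]
  ring

lemma cc123 : (X (cidx 1 2) * X (cidx 2 3) * X (cidx 3 1) - X (cidx 1 3) * X (cidx 3 2) * X (cidx 2 1) : SS K) ∈ Jspan K := by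
  apply mem2
  simp only [genSet, xv, yv, zv, Set.mem_setOf_eq]
  refine Or.inr (Or.inr (Or.inr (Or.inr (Or.inr (Or.inr (Or.inl ?_))))))
  simp only [cidx12, cidx13, cidx21, cidx23, cidx31, cidx32]
  ring

lemma cc130 : (X (cidx 1 3) * X (cidx 3 0) * X (cidx 0 1) - X (cidx 1 0) * X (cidx 0 3) * X (cidx 3 1) : SS K) ∈ Jspan K := by
  apply mem2
  simp only [genSet, xv, yv, zv, Set.mem_setOf_eq]
  refine Or.inr (Or.inr (Or.inr (Or.inr (Or.inr (Or.inr (Or.inr (Or.inr (Or.inl ?_))))))))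
  simp only [cidx01, cidx03, cidx10, cidx13, cidx30, cidx31]
  ring

lemma cc132 : (X (cidx 1 3) * X (cidx 3 2) * X (cidx 2 1) - X (cidx 1 2) * X (cidx 2 3) * X (cidx 3 1) : SS K) ∈ Jspan K := by
  apply mem1
  simp only [genSet, xv, yv, zv, Set.mem_setOf_eq]
  refine Or.inr (Or.inr (Or.inr (Or.inr (Or.inr (Or.inr (Or.inl ?_))))))
  simp only [cidx12, cidx13, cidx21, cidx23, cidx31, cidx32]
  ring

lemma cc201 : (X (cidx 2 0) * X (cidx 0 1) * X (cidx 1 2) - X (cidx 2 1) * X (cidx 1 0) * X (cidx 0 2) : SS K) ∈ Jspan K := by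
  apply mem2
  simp only [genSet, xv, yv, zv, Set.mem_setOf_eq]
  refine Or.inr (Or.inr (Or.inr (Or.inr (Or.inr (Or.inr (Or.inr (Or.inr (Or.inr (?_)))))))))
  simp only [cidx01, cidx02, cidx10, cidx12, cidx20, cidx21]
  ring

lemma cc203 : (X (cidx 2 0) * X (cidx 0 3) * X (cidx 3 2) - X (cidx 2 3) * X (cidx 3 0) * X (cidx 0 2) : SS K) ∈ Jspan K := by
  apply mem1
  simp only [genSet, xv, yv, zv, Set.mem_setOf_eq]
  refine Or.inr (Or.inr (Or.inr (Or.inr (Or.inr (Or.inr (Or.inr (Or.inl ?_)))))))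
  simp only [cidx02, cidx03, cidx20, cidx23, cidx30, cidx32]
  ring

lemma cc210 : (X (cidx 2 1) * X (cidx 1 0) * X (cidx 0 2) - X (cidx 2 0) * X (cidx 0 1) * X (cidx 1 2) : SS K) ∈ Jspan K := by
  apply mem1
  simp only [genSet, xv, yv, zv, Set.mem_setOf_eq]
  refine Or.inr (Or.inr (Or.inr (Or.inr (Or.inr (Or.inr (Or.inr (Or.inr (Or.inr (?_)))))))))
  simp only [cidx01, cidx02, cidx10, cidx12, cidx20, cidx21]
  ring

lemma cc213 : (X (cidx 2 1) * X (cidx 1 3) * X (cidx 3 2) - X (cidx 2 3) * X (cidx 3 1) * X (cidx 1 2) : SS K) ∈ Jspan K := by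
  apply mem1
  simp only [genSet, xv, yv, zv, Set.mem_setOf_eq]
  refine Or.inr (Or.inr (Or.inr (Or.inr (Or.inr (Or.inr (Or.inl ?_))))))
  simp only [cidx12, cidx13, cidx21, cidx23, cidx31, cidx32]
  ring

lemma cc230 : (X (cidx 2 3) * X (cidx 3 0) * X (cidx 0 2) - X (cidx 2 0) * X (cidx 0 3) * X (cidx 3 2) : SS K) ∈ Jspan K := by
  apply mem2
  simp only [genSet, xv, yv, zv, Set.mem_setOf_eq]
  refine Or.inr (Or.inr (Or.inr (Or.inr (Or.inr (Or.inr (Or.inr (Or.inl ?_)))))))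
  simp only [cidx02, cidx03, cidx20, cidx23, cidx30, cidx32]
  ring

lemma cc231 : (X (cidx 2 3) * X (cidx 3 1) * X (cidx 1 2) - X (cidx 2 1) * X (cidx 1 3) * X (cidx 3 2) : SS K) ∈ Jspan K := by
  apply mem2
  simp only [genSet, xv, yv, zv, Set.mem_setOf_eq]
  refine Or.inr (Or.inr (Or.inr (Or.inr (Or.inr (Or.inr (Or.inl ?_))))))
  simp only [cidx12, cidx13, cidx21, cidx23, cidx31, cidx32]
  ring

lemma cc301 : (X (cidx 3 0) * X (cidx 0 1) * X (cidx 1 3) - X (cidx 3 1) * X (cidx 1 0) * X (cidx 0 3) : SS K) ∈ Jspan K := by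
  apply mem2
  simp only [genSet, xv, yv, zv, Set.mem_setOf_eq]
  refine Or.inr (Or.inr (Or.inr (Or.inr (Or.inr (Or.inr (Or.inr (Or.inr (Or.inl ?_))))))))
  simp only [cidx01, cidx03, cidx10, cidx13, cidx30, cidx31]
  ring

lemma cc302 : (X (cidx 3 0) * X (cidx 0 2) * X (cidx 2 3) - X (cidx 3 2) * X (cidx 2 0) * X (cidx 0 3) : SS K) ∈ Jspan K := by
  apply mem2
  simp only [genSet, xv, yv, zv, Set.mem_setOf_eq]
  refine Or.inr (Or.inr (Or.inr (Or.inr (Or.inr (Or.inr (Or.inr (Or.inl ?_)))))))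
  simp only [cidx02, cidx03, cidx20, cidx23, cidx30, cidx32]
  ring

lemma cc310 : (X (cidx 3 1) * X (cidx 1 0) * X (cidx 0 3) - X (cidx 3 0) * X (cidx 0 1) * X (cidx 1 3) : SS K) ∈ Jspan K := by
  apply mem1
  simp only [genSet, xv, yv, zv, Set.mem_setOf_eq]
  refine Or.inr (Or.inr (Or.inr (Or.inr (Or.inr (Or.inr (Or.inr (Or.inr (Or.inl ?_))))))))
  simp only [cidx01, cidx03, cidx10, cidx13, cidx30, cidx31]
  ring

lemma cc312 : (X (cidx 3 1) * X (cidx 1 2) * X (cidx 2 3) - X (cidx 3 2) * X (cidx 2 1) * X (cidx 1 3) : SS K) ∈ Jspan K := by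
  apply mem2
  simp only [genSet, xv, yv, zv, Set.mem_setOf_eq]
  refine Or.inr (Or.inr (Or.inr (Or.inr (Or.inr (Or.inr (Or.inl ?_))))))
  simp only [cidx12, cidx13, cidx21, cidx23, cidx31, cidx32]
  ring

lemma cc320 : (X (cidx 3 2) * X (cidx 2 0) * X (cidx 0 3) - X (cidx 3 0) * X (cidx 0 2) * X (cidx 2 3) : SS K) ∈ Jspan K := by
  apply mem1
  simp only [genSet, xv, yv, zv, Set.mem_setOf_eq]
  refine Or.inr (Or.inr (Or.inr (Or.inr (Or.inr (Or.inr (Or.inr (Or.inl ?_)))))))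
  simp only [cidx02, cidx03, cidx20, cidx23, cidx30, cidx32]
  ring

lemma cc321 : (X (cidx 3 2) * X (cidx 2 1) * X (cidx 1 3) - X (cidx 3 1) * X (cidx 1 2) * X (cidx 2 3) : SS K) ∈ Jspan K := by
  apply mem1
  simp only [genSet, xv, yv, zv, Set.mem_setOf_eq]
  refine Or.inr (Or.inr (Or.inr (Or.inr (Or.inr (Or.inr (Or.inl ?_))))))
  simp only [cidx12, cidx13, cidx21, cidx23, cidx31, cidx32]
  ring

set_option maxHeartbeats 8000000 in
lemma Qmem (p q s t : Fin 4) (hpq : p ≠ q) (hst : s ≠ t) (hps : p ≠ s) (hpt : p ≠ t)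
    (hqs : q ≠ s) (hqt : q ≠ t) :
    (X (cidx p s) * X (cidx q t) - X (cidx p t) * X (cidx q s) : SS K) ∈ Jspan K := by
  fin_cases p <;> fin_cases q <;> fin_cases s <;> fin_cases t <;>
    first
    | exact absurd rfl hpq | exact absurd rfl hst | exact absurd rfl hps
    | exact absurd rfl hpt | exact absurd rfl hqs | exact absurd rfl hqt
    | exact qc0123 K
    | exact qc0132 K
    | exact qc0213 K
    | exact qc0231 K
    | exact qc0312 K
    | exact qc0321 K
    | exact qc1023 K
    | exact qc1032 K
    | exact qc1203 K
    | exact qc1230 K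
    | exact qc1302 K
    | exact qc1320 K
    | exact qc2013 K
    | exact qc2031 K
    | exact qc2103 K
    | exact qc2130 K
    | exact qc2301 K
    | exact qc2310 K
    | exact qc3012 K
    | exact qc3021 K
    | exact qc3102 K
    | exact qc3120 K
    | exact qc3201 K
    | exact qc3210 K

set_option maxHeartbeats 8000000 in
lemma Cmem (i j k : Fin 4) (hij : i ≠ j) (hjk : j ≠ k) (hik : i ≠ k) :
    (X (cidx i j) * X (cidx j k) * X (cidx k i) - X (cidx i k) * X (cidx k j) * X (cidx j i) : SS K) ∈ Jspan K := by
  fin_cases i <;> fin_cases j <;> fin_cases k <;>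
    first
    | exact absurd rfl hij | exact absurd rfl hjk | exact absurd rfl hik
    | exact cc012 K
    | exact cc013 K
    | exact cc021 K
    | exact cc023 K
    | exact cc031 K
    | exact cc032 K
    | exact cc102 K
    | exact cc103 K
    | exact cc120 K
    | exact cc123 K
    | exact cc130 K
    | exact cc132 K
    | exact cc201 K
    | exact cc203 K
    | exact cc210 K
    | exact cc213 K
    | exact cc230 K
    | exact cc231 K
    | exact cc301 K
    | exact cc302 K
    | exact cc310 K
    | exact cc312 K
    | exact cc320 K
    | exact cc321 K

----------------------------------------------------------------
-- Monomial algebra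
----------------------------------------------------------------

lemma X_as_monomial (v : Fin 4 × Fin 3) : (X v : SS K) = monomial (Finsupp.single v 1) 1 := rfl

lemma mono_mul_X (dl : (Fin 4 × Fin 3) →₀ ℕ) (v : Fin 4 × Fin 3) :
    monomial (dl + Finsupp.single v 1) (1:K) = monomial dl 1 * X v := by
  rw [X_as_monomial, monomial_mul, mul_one]

lemma QmoveMem (dl : (Fin 4 × Fin 3) →₀ ℕ) (p q s t : Fin 4) (hpq : p ≠ q) (hst : s ≠ t)
    (hps : p ≠ s) (hpt : p ≠ t) (hqs : q ≠ s) (hqt : q ≠ t) :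
    monomial (dl + Finsupp.single (cidx p s) 1 + Finsupp.single (cidx q t) 1) (1:K) -
      monomial (dl + Finsupp.single (cidx p t) 1 + Finsupp.single (cidx q s) 1) 1 ∈ Jspan K := by
  rw [mono_mul_X, mono_mul_X, mono_mul_X, mono_mul_X]
  have h : monomial dl (1:K) * X (cidx p s) * X (cidx q t) -
      monomial dl 1 * X (cidx p t) * X (cidx q s) =
      monomial dl 1 * (X (cidx p s) * X (cidx q t) - X (cidx p t) * X (cidx q s)) := by ring
  rw [h]
  exact Ideal.mul_mem_left _ _ (Qmem K p q s t hpq hst hps hpt hqs hqt)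

lemma CmoveMem (dl : (Fin 4 × Fin 3) →₀ ℕ) (i j k : Fin 4) (hij : i ≠ j) (hjk : j ≠ k)
    (hik : i ≠ k) :
    monomial (dl + Finsupp.single (cidx i j) 1 + Finsupp.single (cidx j k) 1 +
        Finsupp.single (cidx k i) 1) (1:K) -
      monomial (dl + Finsupp.single (cidx i k) 1 + Finsupp.single (cidx k j) 1 +
        Finsupp.single (cidx j i) 1) 1 ∈ Jspan K := by
  rw [mono_mul_X, mono_mul_X, mono_mul_X, mono_mul_X, mono_mul_X, mono_mul_X]
  have h : monomial dl (1:K) * X (cidx i j) * X (cidx j k) * X (cidx k i) -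
      monomial dl 1 * X (cidx i k) * X (cidx k j) * X (cidx j i) =
      monomial dl 1 * (X (cidx i j) * X (cidx j k) * X (cidx k i) -
        X (cidx i k) * X (cidx k j) * X (cidx j i)) := by ring
  rw [h]
  exact Ideal.mul_mem_left _ _ (Cmem K i j k hij hjk hik)

lemma T_cell (j i : Fin 4) (h : j ≠ i) :
    T (Finsupp.single (cidx j i) 1) =
      Finsupp.single (Sum.inl j) 1 + Finsupp.single (Sum.inr i) 1 := by
  rw [T_single, rowOf_cidx j i h, snd_cidx]

lemma T_move_Q (dl : (Fin 4 × Fin 3) →₀ ℕ) (p q s t : Fin 4)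
    (hps : p ≠ s) (hpt : p ≠ t) (hqs : q ≠ s) (hqt : q ≠ t) :
    T (dl + Finsupp.single (cidx p s) 1 + Finsupp.single (cidx q t) 1) =
      T (dl + Finsupp.single (cidx p t) 1 + Finsupp.single (cidx q s) 1) := by
  rw [T_add, T_add, T_add, T_add, T_cell p s hps, T_cell q t hqt, T_cell p t hpt,
    T_cell q s hqs]
  abel

lemma T_move_C (dl : (Fin 4 × Fin 3) →₀ ℕ) (i j k : Fin 4)
    (hij : i ≠ j) (hji : j ≠ i) (hjk : j ≠ k) (hkj : k ≠ j) (hik : i ≠ k) (hki : k ≠ i) :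
    T (dl + Finsupp.single (cidx i j) 1 + Finsupp.single (cidx j k) 1 +
        Finsupp.single (cidx k i) 1) =
      T (dl + Finsupp.single (cidx i k) 1 + Finsupp.single (cidx k j) 1 +
        Finsupp.single (cidx j i) 1) := by
  rw [T_add, T_add, T_add, T_add, T_add, T_add, T_cell i j hij, T_cell j k hjk,
    T_cell k i hki, T_cell i k hik, T_cell k j hkj, T_cell j i hji]
  abel

lemma split2 {al : (Fin 4 × Fin 3) →₀ ℕ} {u v : Fin 4 × Fin 3} (hu : al u ≠ 0) (hv : al v ≠ 0)
    (huv : u ≠ v) :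
    al = (al - Finsupp.single u 1 - Finsupp.single v 1) + Finsupp.single u 1 +
      Finsupp.single v 1 := by
  ext a
  have h1 : (if u = a then 1 else 0) ≤ al a := by
    split_ifs with h
    · subst h; omega
    · exact Nat.zero_le _
  have h2 : (if v = a then 1 else 0) ≤ al a := by
    split_ifs with h
    · subst h; omega
    · exact Nat.zero_le _
  simp only [Finsupp.add_apply, Finsupp.tsub_apply, Finsupp.single_apply]
  split_ifs at h1 h2 ⊢ <;>
    first
    | exact absurd (‹u = a›.trans ‹v = a›.symm) huv
    | omega

lemma split3 {al : (Fin 4 × Fin 3) →₀ ℕ} {u v w : Fin 4 × Fin 3} (hu : al u ≠ 0)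
    (hv : al v ≠ 0) (hw : al w ≠ 0) (huv : u ≠ v) (huw : u ≠ w) (hvw : v ≠ w) :
    al = (al - Finsupp.single u 1 - Finsupp.single v 1 - Finsupp.single w 1) +
      Finsupp.single u 1 + Finsupp.single v 1 + Finsupp.single w 1 := by
  ext a
  have h1 : (if u = a then 1 else 0) ≤ al a := by
    split_ifs with h
    · subst h; omega
    · exact Nat.zero_le _
  have h2 : (if v = a then 1 else 0) ≤ al a := by
    split_ifs with h
    · subst h; omega
    · exact Nat.zero_le _
  have h3 : (if w = a then 1 else 0) ≤ al a := by
    split_ifs with h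
    · subst h; omega
    · exact Nat.zero_le _
  simp only [Finsupp.add_apply, Finsupp.tsub_apply, Finsupp.single_apply]
  split_ifs at h1 h2 h3 ⊢ <;>
    first
    | exact absurd (‹u = a›.trans ‹v = a›.symm) huv
    | exact absurd (‹u = a›.trans ‹w = a›.symm) huw
    | exact absurd (‹v = a›.trans ‹w = a›.symm) hvw
    | omega

lemma apply_pos2 (dl : (Fin 4 × Fin 3) →₀ ℕ) {a b : Fin 4 × Fin 3} (hab : a ≠ b) :
    ((dl + Finsupp.single a 1 + Finsupp.single b 1 : (Fin 4 × Fin 3) →₀ ℕ)) a ≠ 0 := by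
  simp [Finsupp.add_apply, Finsupp.single_apply, hab]

lemma apply_pos2' (dl : (Fin 4 × Fin 3) →₀ ℕ) {a b : Fin 4 × Fin 3} (hab : a ≠ b) :
    ((dl + Finsupp.single a 1 + Finsupp.single b 1 : (Fin 4 × Fin 3) →₀ ℕ)) b ≠ 0 := by
  simp [Finsupp.add_apply, Finsupp.single_apply, hab]

lemma apply_pos3 (dl : (Fin 4 × Fin 3) →₀ ℕ) {a b c : Fin 4 × Fin 3} (hab : a ≠ b)
    (hac : a ≠ c) :
    ((dl + Finsupp.single a 1 + Finsupp.single b 1 + Finsupp.single c 1 : (Fin 4 × Fin 3) →₀ ℕ)) a ≠ 0 := by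
  simp [Finsupp.add_apply, Finsupp.single_apply, hab, hac]

lemma cell_eq {v w : Fin 4 × Fin 3} (hr : rowOf v = rowOf w) (hc : v.1 = w.1) : v = w := by
  rw [← cidx_rowOf v, ← cidx_rowOf w, hr, hc]

lemma eq_cidx (v : Fin 4 × Fin 3) : v = cidx (rowOf v) v.1 := (cidx_rowOf v).symm

----------------------------------------------------------------
-- The key binomial lemma
----------------------------------------------------------------

lemma shared_step {n : ℕ}
    (ih : ∀ al bt : (Fin 4 × Fin 3) →₀ ℕ, deg al ≤ n → T al = T bt →
       monomial al (1:K) - monomial bt 1 ∈ Jspan K)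
    (al bt : (Fin 4 × Fin 3) →₀ ℕ) (hd : deg al ≤ n + 1) (hT : T al = T bt)
    (v : Fin 4 × Fin 3) (hva : al v ≠ 0) (hvb : bt v ≠ 0) :
    monomial al (1:K) - monomial bt 1 ∈ Jspan K := by
  have hsp1 : ∀ (g : (Fin 4 × Fin 3) →₀ ℕ), g v ≠ 0 →
      g = (g - Finsupp.single v 1) + Finsupp.single v 1 := by
    intro g hg
    ext a
    have h1 : (if v = a then 1 else 0) ≤ g a := by
      split_ifs with h
      · subst h; omega
      · exact Nat.zero_le _
    simp only [Finsupp.add_apply, Finsupp.tsub_apply, Finsupp.single_apply]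
    split_ifs at h1 ⊢ <;> omega
  have hae := hsp1 al hva
  have hbe := hsp1 bt hvb
  have hT1 : T (al - Finsupp.single v 1) = T (bt - Finsupp.single v 1) := by
    have h2 : T ((al - Finsupp.single v 1) + Finsupp.single v 1) =
        T ((bt - Finsupp.single v 1) + Finsupp.single v 1) := by rw [← hae, ← hbe]; exact hT
    rw [T_add, T_add] at h2
    ext x
    have h3 := DFunLike.congr_fun h2 x
    simp only [Finsupp.add_apply] at h3
    omega
  have hd1 : deg (al - Finsupp.single v 1) ≤ n := by
    have h4 : deg al = deg (al - Finsupp.single v 1) + 1 := by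
      conv_lhs => rw [hae]
      rw [deg_add, deg_single]
    omega
  have hmem := ih _ _ hd1 hT1
  rw [hae, hbe, mono_mul_X, mono_mul_X]
  have h5 : monomial (al - Finsupp.single v 1) (1:K) * X v -
      monomial (bt - Finsupp.single v 1) 1 * X v =
      (monomial (al - Finsupp.single v 1) 1 - monomial (bt - Finsupp.single v 1) 1) * X v := by
    ring
  rw [h5]
  exact Ideal.mul_mem_right _ _ hmem

set_option maxHeartbeats 1000000 in
lemma key (n : ℕ) : ∀ al bt : (Fin 4 × Fin 3) →₀ ℕ, deg al ≤ n → T al = T bt →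
    monomial al (1:K) - monomial bt 1 ∈ Jspan K := by
  induction n with
  | zero =>
    intro al bt hd hT
    have ha0 : al = 0 := deg_eq_zero (Nat.le_zero.1 hd)
    have hb0 : bt = 0 := T_eq_zero (by rw [← hT, ha0, T_zero])
    rw [ha0, hb0, sub_self]
    exact zero_mem _
  | succ n ih =>
    intro al bt hd hT
    by_cases hsh : ∃ v, al v ≠ 0 ∧ bt v ≠ 0
    · obtain ⟨v, hva, hvb⟩ := hsh
      exact shared_step K ih al bt hd hT v hva hvb
    by_cases ha0 : al = 0
    · have hb0 : bt = 0 := T_eq_zero (by rw [← hT, ha0, T_zero])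
      rw [ha0, hb0, sub_self]
      exact zero_mem _
    have hdisj : ∀ v, al v ≠ 0 → bt v = 0 := by
      intro v h1
      by_contra h2
      exact hsh ⟨v, h1, h2⟩
    obtain ⟨v₀, hv₀⟩ : ∃ v, al v ≠ 0 := by
      by_contra h
      push_neg at h
      exact ha0 (Finsupp.ext fun v => h v)
    have hps : rowOf v₀ ≠ v₀.1 := rowOf_ne v₀
    -- row (rowOf v₀) of bt
    obtain ⟨w₁, hw₁, hw₁r⟩ : ∃ w, bt w ≠ 0 ∧ rowOf w = rowOf v₀ :=
      T_row_ex (by rw [← hT]; exact T_row_pos hv₀)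
    have hpt : rowOf v₀ ≠ w₁.1 := hw₁r ▸ rowOf_ne w₁
    have hts : w₁.1 ≠ v₀.1 := by
      intro h
      exact hw₁ (hdisj w₁ (by rwa [cell_eq hw₁r h]))
    -- col v₀.1 of bt
    obtain ⟨w₂, hw₂, hw₂c⟩ : ∃ w, bt w ≠ 0 ∧ w.1 = v₀.1 :=
      T_col_ex (by rw [← hT]; exact T_col_pos hv₀)
    have hqs : rowOf w₂ ≠ v₀.1 := hw₂c ▸ rowOf_ne w₂
    have hqp : rowOf w₂ ≠ rowOf v₀ := by
      intro h
      exact hw₂ (hdisj w₂ (by rwa [cell_eq h hw₂c]))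
    by_cases hqt : rowOf w₂ ≠ w₁.1
    · -- Case A : Q-move on bt, producing the cell v₀
      have hw12 : w₁ ≠ w₂ := by
        intro h
        exact hqp (by rw [← h, hw₁r])
      have hbe := split2 hw₁ hw₂ hw12
      set dl := bt - Finsupp.single w₁ 1 - Finsupp.single w₂ 1 with hdl
      have hw₁e : cidx (rowOf v₀) w₁.1 = w₁ := by rw [← hw₁r]; exact cidx_rowOf w₁
      have hw₂e : cidx (rowOf w₂) v₀.1 = w₂ := by rw [← hw₂c]; exact cidx_rowOf w₂
      have hbt : dl + Finsupp.single (cidx (rowOf v₀) w₁.1) 1 +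
          Finsupp.single (cidx (rowOf w₂) v₀.1) 1 = bt := by
        rw [hw₁e, hw₂e]; exact hbe.symm
      have hQ := QmoveMem K dl (rowOf v₀) (rowOf w₂) v₀.1 w₁.1 hqp.symm hts.symm hps hpt hqs hqt
      have hTQ := T_move_Q dl (rowOf v₀) (rowOf w₂) v₀.1 w₁.1 hps hpt hqs hqt
      rw [hbt] at hQ hTQ
      rw [cidx_rowOf v₀] at hQ hTQ
      -- γ := dl + single v₀ 1 + single (cidx (rowOf w₂) w₁.1) 1
      have hne : v₀ ≠ cidx (rowOf w₂) w₁.1 := by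
        intro h
        have h2 : rowOf v₀ = rowOf (cidx (rowOf w₂) w₁.1) := by rw [← h]
        rw [rowOf_cidx _ _ hqt] at h2
        exact hqp h2.symm
      have hγv : ((dl + Finsupp.single v₀ 1 + Finsupp.single (cidx (rowOf w₂) w₁.1) 1 :
          (Fin 4 × Fin 3) →₀ ℕ)) v₀ ≠ 0 :=
        apply_pos2 dl hne
      have h1 := shared_step K ih al
        (dl + Finsupp.single v₀ 1 + Finsupp.single (cidx (rowOf w₂) w₁.1) 1) hd
        (hT.trans hTQ.symm) v₀ hv₀ hγv
      have h3 : monomial al (1:K) - monomial bt 1 =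
          (monomial al 1 -
            monomial (dl + Finsupp.single v₀ 1 + Finsupp.single (cidx (rowOf w₂) w₁.1) 1) 1) +
          (monomial (dl + Finsupp.single v₀ 1 + Finsupp.single (cidx (rowOf w₂) w₁.1) 1) 1 -
            monomial bt 1) := by ring
      rw [h3]
      exact add_mem h1 hQ
    · -- Case B : q = t
      push_neg at hqt
      -- row w₁.1 of al
      obtain ⟨u₁, hu₁, hu₁r⟩ : ∃ u, al u ≠ 0 ∧ rowOf u = w₁.1 := by
        refine T_row_ex ?_
        rw [hT, ← hqt]
        exact T_row_pos hw₂
      have htc : w₁.1 ≠ u₁.1 := hu₁r ▸ rowOf_ne u₁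
      have hw₂q : cidx w₁.1 v₀.1 = w₂ := by rw [← hqt, ← hw₂c]; exact cidx_rowOf w₂
      have hcs : u₁.1 ≠ v₀.1 := by
        intro h
        have h2 : u₁ = w₂ := cell_eq (by rw [hu₁r, ← hqt]) (by rw [h, hw₂c])
        exact hw₂ (h2 ▸ hdisj u₁ hu₁)
      by_cases hcp : u₁.1 ≠ rowOf v₀
      · -- Case B1 : Q-move on al, rows (t,p) cols (c,s), producing the cell w₂
        have hu₁v₀ : u₁ ≠ v₀ := by
          intro h
          exact hpt (by rw [← h, hu₁r])
        have hae := split2 hu₁ hv₀ hu₁v₀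
        set dl := al - Finsupp.single u₁ 1 - Finsupp.single v₀ 1 with hdl
        have hu₁e : cidx w₁.1 u₁.1 = u₁ := by rw [← hu₁r]; exact cidx_rowOf u₁
        have hal : dl + Finsupp.single (cidx w₁.1 u₁.1) 1 +
            Finsupp.single (cidx (rowOf v₀) v₀.1) 1 = al := by
          rw [hu₁e, cidx_rowOf v₀]; exact hae.symm
        have hQ := QmoveMem K dl w₁.1 (rowOf v₀) u₁.1 v₀.1 hpt.symm hcs htc hts
          (fun h => hcp h.symm) hps
        have hTQ := T_move_Q dl w₁.1 (rowOf v₀) u₁.1 v₀.1 htc hts (fun h => hcp h.symm) hps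
        rw [hal] at hQ hTQ
        rw [hw₂q] at hQ hTQ
        -- γ := dl + single w₂ 1 + single (cidx (rowOf v₀) u₁.1) 1
        have hne : w₂ ≠ cidx (rowOf v₀) u₁.1 := by
          intro h
          have h2 : rowOf w₂ = rowOf (cidx (rowOf v₀) u₁.1) := by rw [← h]
          rw [rowOf_cidx _ _ (fun h3 => hcp h3.symm)] at h2
          exact hqp h2
        have hγw : ((dl + Finsupp.single w₂ 1 + Finsupp.single (cidx (rowOf v₀) u₁.1) 1 :
            (Fin 4 × Fin 3) →₀ ℕ)) w₂ ≠ 0 :=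
          apply_pos2 dl hne
        have hdγ : deg (dl + Finsupp.single w₂ 1 + Finsupp.single (cidx (rowOf v₀) u₁.1) 1) ≤
            n + 1 := by
          have h4 : deg al = deg dl + 2 := by
            conv_lhs => rw [hae]
            rw [deg_add, deg_add, deg_single, deg_single]
          have h5 : deg (dl + Finsupp.single w₂ 1 +
              Finsupp.single (cidx (rowOf v₀) u₁.1) 1) = deg dl + 2 := by
            rw [deg_add, deg_add, deg_single, deg_single]
          omega
        have h1 := shared_step K ih
          (dl + Finsupp.single w₂ 1 + Finsupp.single (cidx (rowOf v₀) u₁.1) 1) bt hdγ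
          (hTQ.symm.trans hT) w₂ hγw hw₂
        have h3 : monomial al (1:K) - monomial bt 1 =
            (monomial al 1 -
              monomial (dl + Finsupp.single w₂ 1 + Finsupp.single (cidx (rowOf v₀) u₁.1) 1) 1) +
            (monomial (dl + Finsupp.single w₂ 1 + Finsupp.single (cidx (rowOf v₀) u₁.1) 1) 1 -
              monomial bt 1) := by ring
        rw [h3]
        exact add_mem hQ h1
      · push_neg at hcp
        -- u₁ = cidx t p
        have hu₁e : cidx w₁.1 (rowOf v₀) = u₁ := by
          rw [← hu₁r, ← hcp]; exact cidx_rowOf u₁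
        -- col w₁.1 of al
        obtain ⟨u₂, hu₂, hu₂c⟩ : ∃ u, al u ≠ 0 ∧ u.1 = w₁.1 := by
          refine T_col_ex ?_
          rw [hT]
          exact T_col_pos hw₁
        have hr't : rowOf u₂ ≠ w₁.1 := hu₂c ▸ rowOf_ne u₂
        have hw₁q : cidx (rowOf v₀) w₁.1 = w₁ := by rw [← hw₁r]; exact cidx_rowOf w₁
        have hr'p : rowOf u₂ ≠ rowOf v₀ := by
          intro h
          have h2 : u₂ = w₁ := cell_eq (by rw [h, hw₁r]) (by rw [hu₂c])
          exact hw₁ (h2 ▸ hdisj u₂ hu₂)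
        by_cases hr's : rowOf u₂ = v₀.1
        · -- Case B2a : C-move on al with (i,j,k) = (p,s,t), producing the cell w₁
          have hu₂e : cidx v₀.1 w₁.1 = u₂ := by rw [← hr's, ← hu₂c]; exact cidx_rowOf u₂
          have h12 : v₀ ≠ u₂ := by
            intro h
            apply hps
            conv_lhs => rw [h]
            exact hr's
          have h13 : v₀ ≠ u₁ := by
            intro h
            apply hpt
            conv_lhs => rw [h]
            exact hu₁r
          have h23 : u₂ ≠ u₁ := by
            intro h
            apply hr't
            conv_lhs => rw [h]
            exact hu₁r
          have hae := split3 hv₀ hu₂ hu₁ h12 h13 h23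
          set dl := al - Finsupp.single v₀ 1 - Finsupp.single u₂ 1 - Finsupp.single u₁ 1 with hdl
          have hal : dl + Finsupp.single (cidx (rowOf v₀) v₀.1) 1 +
              Finsupp.single (cidx v₀.1 w₁.1) 1 + Finsupp.single (cidx w₁.1 (rowOf v₀)) 1 = al := by
            rw [cidx_rowOf v₀, hu₂e, hu₁e]; exact hae.symm
          have hC := CmoveMem K dl (rowOf v₀) v₀.1 w₁.1 hps hts.symm hpt
          have hTC := T_move_C dl (rowOf v₀) v₀.1 w₁.1 hps (Ne.symm hps) hts.symm hts hpt
            (Ne.symm hpt)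
          rw [hal] at hC hTC
          rw [hw₁q] at hC hTC
          -- γ := dl + single w₁ 1 + single (cidx w₁.1 v₀.1) 1 + single (cidx v₀.1 (rowOf v₀)) 1
          have hne1 : w₁ ≠ cidx w₁.1 v₀.1 := by
            intro h
            have h2 : rowOf w₁ = rowOf (cidx w₁.1 v₀.1) := by rw [← h]
            rw [rowOf_cidx _ _ hts, hw₁r] at h2
            exact hpt h2
          have hne2 : w₁ ≠ cidx v₀.1 (rowOf v₀) := by
            intro h
            have h2 : rowOf w₁ = rowOf (cidx v₀.1 (rowOf v₀)) := by rw [← h]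
            rw [rowOf_cidx _ _ (Ne.symm hps), hw₁r] at h2
            exact hps h2
          have hγw : ((dl + Finsupp.single w₁ 1 + Finsupp.single (cidx w₁.1 v₀.1) 1 +
              Finsupp.single (cidx v₀.1 (rowOf v₀)) 1 : (Fin 4 × Fin 3) →₀ ℕ)) w₁ ≠ 0 :=
            apply_pos3 dl hne1 hne2
          have hdγ : deg (dl + Finsupp.single w₁ 1 + Finsupp.single (cidx w₁.1 v₀.1) 1 +
              Finsupp.single (cidx v₀.1 (rowOf v₀)) 1) ≤ n + 1 := by
            have h4 : deg al = deg dl + 3 := by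
              conv_lhs => rw [hae]
              rw [deg_add, deg_add, deg_add, deg_single, deg_single, deg_single]
            have h5 : deg (dl + Finsupp.single w₁ 1 + Finsupp.single (cidx w₁.1 v₀.1) 1 +
                Finsupp.single (cidx v₀.1 (rowOf v₀)) 1) = deg dl + 3 := by
              rw [deg_add, deg_add, deg_add, deg_single, deg_single, deg_single]
            omega
          have h1 := shared_step K ih
            (dl + Finsupp.single w₁ 1 + Finsupp.single (cidx w₁.1 v₀.1) 1 +
              Finsupp.single (cidx v₀.1 (rowOf v₀)) 1) bt hdγ
            (hTC.symm.trans hT) w₁ hγw hw₁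
          have h3 : monomial al (1:K) - monomial bt 1 =
              (monomial al 1 -
                monomial (dl + Finsupp.single w₁ 1 + Finsupp.single (cidx w₁.1 v₀.1) 1 +
                  Finsupp.single (cidx v₀.1 (rowOf v₀)) 1) 1) +
              (monomial (dl + Finsupp.single w₁ 1 + Finsupp.single (cidx w₁.1 v₀.1) 1 +
                  Finsupp.single (cidx v₀.1 (rowOf v₀)) 1) 1 -
                monomial bt 1) := by ring
          rw [h3]
          exact add_mem hC h1
        · -- Case B2b : Q-move on al, rows (r',p) cols (t,s), producing the cell w₁
          have hu₂e : cidx (rowOf u₂) w₁.1 = u₂ := by rw [← hu₂c]; exact cidx_rowOf u₂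
          have hu₂v₀ : u₂ ≠ v₀ := by
            intro h
            exact hr'p (by rw [h])
          have hae := split2 hu₂ hv₀ hu₂v₀
          set dl := al - Finsupp.single u₂ 1 - Finsupp.single v₀ 1 with hdl
          have hal : dl + Finsupp.single (cidx (rowOf u₂) w₁.1) 1 +
              Finsupp.single (cidx (rowOf v₀) v₀.1) 1 = al := by
            rw [hu₂e, cidx_rowOf v₀]; exact hae.symm
          have hQ := QmoveMem K dl (rowOf u₂) (rowOf v₀) w₁.1 v₀.1 hr'p hts hr't hr's hpt hps
          have hTQ := T_move_Q dl (rowOf u₂) (rowOf v₀) w₁.1 v₀.1 hr't hr's hpt hps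
          rw [hal] at hQ hTQ
          rw [hw₁q] at hQ hTQ
          -- γ := dl + single (cidx (rowOf u₂) v₀.1) 1 + single w₁ 1
          have hne : cidx (rowOf u₂) v₀.1 ≠ w₁ := by
            intro h
            have h2 : rowOf (cidx (rowOf u₂) v₀.1) = rowOf w₁ := by rw [h]
            rw [rowOf_cidx _ _ hr's, hw₁r] at h2
            exact hr'p h2
          have hγw : ((dl + Finsupp.single (cidx (rowOf u₂) v₀.1) 1 + Finsupp.single w₁ 1 :
              (Fin 4 × Fin 3) →₀ ℕ)) w₁ ≠ 0 :=
            apply_pos2' dl hne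
          have hdγ : deg (dl + Finsupp.single (cidx (rowOf u₂) v₀.1) 1 +
              Finsupp.single w₁ 1) ≤ n + 1 := by
            have h4 : deg al = deg dl + 2 := by
              conv_lhs => rw [hae]
              rw [deg_add, deg_add, deg_single, deg_single]
            have h5 : deg (dl + Finsupp.single (cidx (rowOf u₂) v₀.1) 1 +
                Finsupp.single w₁ 1) = deg dl + 2 := by
              rw [deg_add, deg_add, deg_single, deg_single]
            omega
          have h1 := shared_step K ih
            (dl + Finsupp.single (cidx (rowOf u₂) v₀.1) 1 + Finsupp.single w₁ 1) bt hdγ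
            (hTQ.symm.trans hT) w₁ hγw hw₁
          have h3 : monomial al (1:K) - monomial bt 1 =
              (monomial al 1 -
                monomial (dl + Finsupp.single (cidx (rowOf u₂) v₀.1) 1 +
                  Finsupp.single w₁ 1) 1) +
              (monomial (dl + Finsupp.single (cidx (rowOf u₂) v₀.1) 1 +
                  Finsupp.single w₁ 1) 1 - monomial bt 1) := by ring
          rw [h3]
          exact add_mem hQ h1

----------------------------------------------------------------
-- The monomial map
----------------------------------------------------------------

def phi : SS K →ₐ[K] MvPolynomial (Fin 4 ⊕ Fin 4) K :=
  aeval fun v => X (Sum.inl (rowOf v)) * X (Sum.inr v.1)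

def psi : RR K →ₐ[K] MvPolynomial (Fin 4 ⊕ Fin 4) K :=
  aeval (Sum.elim (fun m => X (Sum.inl m) * X (Sum.inr m))
    (fun v => X (Sum.inl (rowOf v)) * X (Sum.inr v.1)))

lemma psi_rename (f : SS K) :
    psi K (rename (Sum.inr : (Fin 4 × Fin 3) → Fin 4 ⊕ (Fin 4 × Fin 3)) f) = phi K f := by
  rw [psi, aeval_rename, Sum.elim_comp_inr]
  rfl

lemma phi_X (v : Fin 4 × Fin 3) :
    phi K (X v) = X (Sum.inl (rowOf v)) * X (Sum.inr v.1) := aeval_X _ v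

lemma phi_monomial (al : (Fin 4 × Fin 3) →₀ ℕ) (c : K) :
    phi K (monomial al c) = monomial (T al) c := by
  induction al using Finsupp.induction with
  | zero =>
    rw [T_zero]
    rw [monomial_zero', monomial_zero']
    exact (phi K).commutes c
  | single_add v k f hvf hk ihf =>
    have h1 : monomial (Finsupp.single v k + f) c =
        monomial (Finsupp.single v k) (1:K) * monomial f c := by
      rw [monomial_mul, one_mul]
    rw [h1, map_mul, ihf]
    have h2 : phi K (monomial (Finsupp.single v k) (1:K)) =
        monomial (T (Finsupp.single v k)) 1 := by
      rw [← X_pow_eq_monomial, map_pow, phi_X, mul_pow, X_pow_eq_monomial, X_pow_eq_monomial,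
        monomial_mul, one_mul, T_single]
    rw [h2, monomial_mul, one_mul, T_add]

lemma ker_phi (N : ℕ) : ∀ f : SS K, f.support.card ≤ N → phi K f = 0 → f ∈ Jspan K := by
  induction N with
  | zero =>
    intro f hc _
    have h1 : f.support = ∅ := Finset.card_eq_zero.1 (Nat.le_zero.1 hc)
    rw [MvPolynomial.support_eq_empty.1 h1]
    exact zero_mem _
  | succ N ih =>
    intro f hc h0
    by_cases hf : f = 0
    · rw [hf]; exact zero_mem _
    have hne : f.support.Nonempty := by
      rw [Finset.nonempty_iff_ne_empty]
      intro h
      exact hf (MvPolynomial.support_eq_empty.1 h)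
    obtain ⟨a, ha⟩ := hne
    have hca : coeff a f ≠ 0 := MvPolynomial.mem_support_iff.1 ha
    have hco : ∀ m, coeff m (phi K f) =
        ∑ v ∈ f.support, if T v = m then coeff v f else 0 := by
      intro m
      conv_lhs => rw [as_sum f]
      rw [map_sum, coeff_sum]
      exact Finset.sum_congr rfl fun v _ => by rw [phi_monomial, coeff_monomial]
    have hz : ∑ v ∈ f.support, (if T v = T a then coeff v f else 0) = 0 := by
      rw [← hco, h0, coeff_zero]
    have hex : ∃ b ∈ f.support, b ≠ a ∧ T b = T a := by
      by_contra hno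
      push_neg at hno
      have h5 : ∑ v ∈ f.support, (if T v = T a then coeff v f else 0) = coeff a f := by
        rw [Finset.sum_eq_single_of_mem a ha]
        · rw [if_pos rfl]
        · intro b hb hba
          rw [if_neg (hno b hb hba)]
      rw [h5] at hz
      exact hca hz
    obtain ⟨b, hb, hba, hTba⟩ := hex
    set g : SS K := monomial a (coeff a f) - monomial b (coeff a f) with hg
    have hgJ : g ∈ Jspan K := by
      have h6 : g = C (coeff a f) * (monomial a 1 - monomial b 1) := by
        rw [mul_sub, C_mul_monomial, C_mul_monomial, mul_one]
      rw [h6]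
      exact Ideal.mul_mem_left _ _ (key K (deg a) a b le_rfl hTba.symm)
    have hphig : phi K g = 0 := by
      rw [hg, map_sub, phi_monomial, phi_monomial, hTba, sub_self]
    have hsupp : (f - g).support ⊆ f.support.erase a := by
      intro v hv
      have hcv : coeff v (f - g) ≠ 0 := MvPolynomial.mem_support_iff.1 hv
      rw [Finset.mem_erase]
      rcases eq_or_ne v a with rfl | hva
      · exfalso
        apply hcv
        rw [coeff_sub, hg, coeff_sub, coeff_monomial, coeff_monomial, if_pos rfl,
          if_neg hba, sub_zero, sub_self]
      · refine ⟨hva, ?_⟩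
        by_contra hvf
        apply hcv
        have hvb : b ≠ v := fun h => hvf (h ▸ hb)
        rw [coeff_sub, hg, coeff_sub, coeff_monomial, coeff_monomial, if_neg (Ne.symm hva),
          if_neg hvb, MvPolynomial.notMem_support_iff.1 hvf, sub_zero, sub_zero]
    have hcard : (f - g).support.card ≤ N := by
      have h7 := Finset.card_le_card hsupp
      rw [Finset.card_erase_of_mem ha] at h7
      have h8 : 1 ≤ f.support.card := Finset.card_pos.2 ⟨a, ha⟩
      omega
    have hphi' : phi K (f - g) = 0 := by rw [map_sub, h0, hphig, sub_zero]
    have hmem := ih (f - g) hcard hphi'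
    have h9 : f = (f - g) + g := by ring
    rw [h9]
    exact add_mem hmem hgJ

----------------------------------------------------------------
-- The psi map and the minors
----------------------------------------------------------------

lemma tm00 : toricMatrix K 0 0 = X (Sum.inl 0) := rfl
lemma tm01 : toricMatrix K 0 1 = X (Sum.inr ((1:Fin 4),(0:Fin 3))) := rfl
lemma tm02 : toricMatrix K 0 2 = X (Sum.inr ((2:Fin 4),(0:Fin 3))) := rfl
lemma tm03 : toricMatrix K 0 3 = X (Sum.inr ((3:Fin 4),(0:Fin 3))) := rfl
lemma tm10 : toricMatrix K 1 0 = X (Sum.inr ((0:Fin 4),(0:Fin 3))) := rfl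
lemma tm11 : toricMatrix K 1 1 = X (Sum.inl 1) := rfl
lemma tm12 : toricMatrix K 1 2 = X (Sum.inr ((2:Fin 4),(1:Fin 3))) := rfl
lemma tm13 : toricMatrix K 1 3 = X (Sum.inr ((3:Fin 4),(1:Fin 3))) := rfl
lemma tm20 : toricMatrix K 2 0 = X (Sum.inr ((0:Fin 4),(1:Fin 3))) := rfl
lemma tm21 : toricMatrix K 2 1 = X (Sum.inr ((1:Fin 4),(1:Fin 3))) := rfl
lemma tm22 : toricMatrix K 2 2 = X (Sum.inl 2) := rfl
lemma tm23 : toricMatrix K 2 3 = X (Sum.inr ((3:Fin 4),(2:Fin 3))) := rfl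
lemma tm30 : toricMatrix K 3 0 = X (Sum.inr ((0:Fin 4),(2:Fin 3))) := rfl
lemma tm31 : toricMatrix K 3 1 = X (Sum.inr ((1:Fin 4),(2:Fin 3))) := rfl
lemma tm32 : toricMatrix K 3 2 = X (Sum.inr ((2:Fin 4),(2:Fin 3))) := rfl
lemma tm33 : toricMatrix K 3 3 = X (Sum.inl 3) := rfl

lemma minor_mem (a b c d : Fin 4) :
    toricMatrix K a c * toricMatrix K b d - toricMatrix K a d * toricMatrix K b c ∈
      minorsIdeal K :=
  Ideal.subset_span ⟨a, b, c, d, rfl⟩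

set_option maxHeartbeats 800000 in
lemma psi_entry : ∀ i j : Fin 4, psi K (toricMatrix K i j) =
    X (Sum.inl i) * X (Sum.inr j) := by
  intro i j
  fin_cases i <;> fin_cases j <;> exact aeval_X _ _

lemma minors_ker : minorsIdeal K ≤ RingHom.ker (psi K).toRingHom := by
  rw [minorsIdeal, Ideal.span_le]
  rintro p ⟨a, b, c, d, rfl⟩
  have h : psi K (toricMatrix K a c * toricMatrix K b d -
      toricMatrix K a d * toricMatrix K b c) = 0 := by
    rw [map_sub, map_mul, map_mul, psi_entry, psi_entry, psi_entry, psi_entry]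
    ring
  exact h

----------------------------------------------------------------
-- Forward inclusion
----------------------------------------------------------------

abbrev rn : SS K →ₐ[K] RR K :=
  (MvPolynomial.rename (Sum.inr : (Fin 4 × Fin 3) → Fin 4 ⊕ (Fin 4 × Fin 3)) : SS K →ₐ[K] RR K)

set_option maxHeartbeats 1000000 in
lemma forward : ∀ g ∈ genSet K, rn K g ∈ minorsIdeal K := by
  intro g hg
  rcases hg with rfl|rfl|rfl|rfl|rfl|rfl|rfl|rfl|rfl|rfl
  · -- g1 : minor rows (2,1) cols (0,3)
    have h : rn K (yv K 0 * yv K 3 - xv K 0 * zv K 3) =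
        toricMatrix K 2 0 * toricMatrix K 1 3 - toricMatrix K 2 3 * toricMatrix K 1 0 := by
      simp only [xv, yv, zv, map_sub, map_mul, rename_X, tm00, tm01, tm02, tm03, tm10, tm11, tm12, tm13, tm20, tm21, tm22, tm23, tm30, tm31, tm32, tm33]
      ring
    rw [h]; exact minor_mem K 2 1 0 3
  · have h : rn K (yv K 2 * xv K 3 - xv K 2 * yv K 3) =
        toricMatrix K 1 2 * toricMatrix K 0 3 - toricMatrix K 1 3 * toricMatrix K 0 2 := by
      simp only [xv, yv, zv, map_sub, map_mul, rename_X, tm00, tm01, tm02, tm03, tm10, tm11, tm12, tm13, tm20, tm21, tm22, tm23, tm30, tm31, tm32, tm33]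
      ring
    rw [h]; exact minor_mem K 1 0 2 3
  · have h : rn K (yv K 1 * xv K 3 - xv K 1 * zv K 3) =
        toricMatrix K 2 1 * toricMatrix K 0 3 - toricMatrix K 2 3 * toricMatrix K 0 1 := by
      simp only [xv, yv, zv, map_sub, map_mul, rename_X, tm00, tm01, tm02, tm03, tm10, tm11, tm12, tm13, tm20, tm21, tm22, tm23, tm30, tm31, tm32, tm33]
      ring
    rw [h]; exact minor_mem K 2 0 1 3
  · have h : rn K (zv K 0 * yv K 2 - xv K 0 * zv K 2) =
        toricMatrix K 3 0 * toricMatrix K 1 2 - toricMatrix K 3 2 * toricMatrix K 1 0 := by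
      simp only [xv, yv, zv, map_sub, map_mul, rename_X, tm00, tm01, tm02, tm03, tm10, tm11, tm12, tm13, tm20, tm21, tm22, tm23, tm30, tm31, tm32, tm33]
      ring
    rw [h]; exact minor_mem K 3 1 0 2
  · have h : rn K (zv K 1 * xv K 2 - xv K 1 * zv K 2) =
        toricMatrix K 3 1 * toricMatrix K 0 2 - toricMatrix K 3 2 * toricMatrix K 0 1 := by
      simp only [xv, yv, zv, map_sub, map_mul, rename_X, tm00, tm01, tm02, tm03, tm10, tm11, tm12, tm13, tm20, tm21, tm22, tm23, tm30, tm31, tm32, tm33]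
      ring
    rw [h]; exact minor_mem K 3 0 1 2
  · have h : rn K (zv K 0 * yv K 1 - yv K 0 * zv K 1) =
        toricMatrix K 3 0 * toricMatrix K 2 1 - toricMatrix K 3 1 * toricMatrix K 2 0 := by
      simp only [xv, yv, zv, map_sub, map_mul, rename_X, tm00, tm01, tm02, tm03, tm10, tm11, tm12, tm13, tm20, tm21, tm22, tm23, tm30, tm31, tm32, tm33]
      ring
    rw [h]; exact minor_mem K 3 2 0 1
  -- cubics : c(i,j,k) = M_jk * minor(i,k,j,i) + M_kj * minor(j,i,k,i)
  · -- g7 : (i,j,k) = (2,1,3)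
    have h : rn K (yv K 1 * zv K 2 * yv K 3 - zv K 1 * yv K 2 * zv K 3) =
        toricMatrix K 1 3 * (toricMatrix K 2 1 * toricMatrix K 3 2 -
          toricMatrix K 2 2 * toricMatrix K 3 1) +
        toricMatrix K 3 1 * (toricMatrix K 1 3 * toricMatrix K 2 2 -
          toricMatrix K 1 2 * toricMatrix K 2 3) := by
      simp only [xv, yv, zv, map_sub, map_mul, rename_X, tm00, tm01, tm02, tm03, tm10, tm11, tm12, tm13, tm20, tm21, tm22, tm23, tm30, tm31, tm32, tm33]
      ring
    rw [h]
    exact add_mem (Ideal.mul_mem_left _ _ (minor_mem K 2 3 1 2))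
      (Ideal.mul_mem_left _ _ (minor_mem K 1 2 3 2))
  · -- g8 : (i,j,k) = (2,0,3)
    have h : rn K (yv K 0 * zv K 2 * xv K 3 - zv K 0 * xv K 2 * zv K 3) =
        toricMatrix K 0 3 * (toricMatrix K 2 0 * toricMatrix K 3 2 -
          toricMatrix K 2 2 * toricMatrix K 3 0) +
        toricMatrix K 3 0 * (toricMatrix K 0 3 * toricMatrix K 2 2 -
          toricMatrix K 0 2 * toricMatrix K 2 3) := by
      simp only [xv, yv, zv, map_sub, map_mul, rename_X, tm00, tm01, tm02, tm03, tm10, tm11, tm12, tm13, tm20, tm21, tm22, tm23, tm30, tm31, tm32, tm33]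
      ring
    rw [h]
    exact add_mem (Ideal.mul_mem_left _ _ (minor_mem K 2 3 0 2))
      (Ideal.mul_mem_left _ _ (minor_mem K 0 2 3 2))
  · -- g9 : (i,j,k) = (1,0,3)
    have h : rn K (xv K 0 * zv K 1 * xv K 3 - zv K 0 * xv K 1 * yv K 3) =
        toricMatrix K 0 3 * (toricMatrix K 1 0 * toricMatrix K 3 1 -
          toricMatrix K 1 1 * toricMatrix K 3 0) +
        toricMatrix K 3 0 * (toricMatrix K 0 3 * toricMatrix K 1 1 -
          toricMatrix K 0 1 * toricMatrix K 1 3) := by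
      simp only [xv, yv, zv, map_sub, map_mul, rename_X, tm00, tm01, tm02, tm03, tm10, tm11, tm12, tm13, tm20, tm21, tm22, tm23, tm30, tm31, tm32, tm33]
      ring
    rw [h]
    exact add_mem (Ideal.mul_mem_left _ _ (minor_mem K 1 3 0 1))
      (Ideal.mul_mem_left _ _ (minor_mem K 0 1 3 1))
  · -- g10 : (i,j,k) = (1,0,2)
    have h : rn K (xv K 0 * yv K 1 * xv K 2 - yv K 0 * xv K 1 * yv K 2) =
        toricMatrix K 0 2 * (toricMatrix K 1 0 * toricMatrix K 2 1 -
          toricMatrix K 1 1 * toricMatrix K 2 0) +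
        toricMatrix K 2 0 * (toricMatrix K 0 2 * toricMatrix K 1 1 -
          toricMatrix K 0 1 * toricMatrix K 1 2) := by
      simp only [xv, yv, zv, map_sub, map_mul, rename_X, tm00, tm01, tm02, tm03, tm10, tm11, tm12, tm13, tm20, tm21, tm22, tm23, tm30, tm31, tm32, tm33]
      ring
    rw [h]
    exact add_mem (Ideal.mul_mem_left _ _ (minor_mem K 1 2 0 1))
      (Ideal.mul_mem_left _ _ (minor_mem K 0 1 2 1))

----------------------------------------------------------------
-- Main theorem
----------------------------------------------------------------

theorem main : Jspan K = Ideal.comap (rn K).toRingHom (minorsIdeal K) := by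
  apply le_antisymm
  · rw [Jspan, Ideal.span_le]
    intro g hg
    exact forward K g hg
  · intro f hf
    have h0 : psi K (rn K f) = 0 := minors_ker K hf
    rw [psi_rename] at h0
    exact ker_phi K f.support.card f le_rfl h0

/-- The toric multiview ideal for four coordinate cameras equals the elimination ideal
obtained from the 2×2 minors of the 4×4 matrix by eliminating `w₁,…,w₄`. -/
theorem stmt9 :
    Ideal.span {p : SS K |
      p = yv K 0 * yv K 3 - xv K 0 * zv K 3 ∨
      p = yv K 2 * xv K 3 - xv K 2 * yv K 3 ∨
      p = yv K 1 * xv K 3 - xv K 1 * zv K 3 ∨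
      p = zv K 0 * yv K 2 - xv K 0 * zv K 2 ∨
      p = zv K 1 * xv K 2 - xv K 1 * zv K 2 ∨
      p = zv K 0 * yv K 1 - yv K 0 * zv K 1 ∨
      p = yv K 1 * zv K 2 * yv K 3 - zv K 1 * yv K 2 * zv K 3 ∨
      p = yv K 0 * zv K 2 * xv K 3 - zv K 0 * xv K 2 * zv K 3 ∨
      p = xv K 0 * zv K 1 * xv K 3 - zv K 0 * xv K 1 * yv K 3 ∨
      p = xv K 0 * yv K 1 * xv K 2 - yv K 0 * xv K 1 * yv K 2} =
    Ideal.comap (MvPolynomial.rename (Sum.inr : (Fin 4 × Fin 3) → Fin 4 ⊕ (Fin 4 × Fin 3))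
        : SS K →ₐ[K] RR K).toRingHom
      (minorsIdeal K) := main K

end
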